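/- Let B(z,R) be a disc and let Q₁,...,Q_{R/r} be R/r essentially pairwise disjoint squares of side length √(πrR) contained in B(z, R(1+4√(r/R))), where r < R/16 and R/r ∈ ℕ. Then the normalized Lebesgue measure of the symmetric difference of B(z,R) and the union of the squares is at most C·r^{1/2}·R^{3/2} for an absolute constant C. -/
import Mathlib


open MeasureTheory Metric Complex Real

/-- The closed axis-parallel square of center `c` and side length `s`. -/
def closedSquare (c : ℂ) (s : ℝ) : Set ℂ :=
  {w : ℂ | |w.re - c.re| ≤ s / 2 ∧ |w.im - c.im| ≤ s / 2}

/-- Planar Lebesgue measure normalized so that `m₂(B(0,1)) = 1`. -/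
noncomputable def m2 : Measure ℂ := (ENNReal.ofReal π)⁻¹ • volume

lemma measurableSet_closedSquare (c : ℂ) (s : ℝ) : MeasurableSet (closedSquare c s) := by
  have : closedSquare c s =
      (Complex.measurableEquivRealProd ⁻¹'
        (Set.Icc (c.re - s/2) (c.re + s/2) ×ˢ Set.Icc (c.im - s/2) (c.im + s/2))) := by
    ext w
    simp only [closedSquare, Set.mem_setOf_eq, Set.mem_preimage,
      Complex.measurableEquivRealProd_apply, Set.mem_prod, Set.mem_Icc, abs_le]
    constructor
    · rintro ⟨⟨h1, h2⟩, h3, h4⟩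
      exact ⟨⟨by linarith, by linarith⟩, by linarith, by linarith⟩
    · rintro ⟨⟨h1, h2⟩, h3, h4⟩
      exact ⟨⟨by linarith, by linarith⟩, by linarith, by linarith⟩
  rw [this]
  exact Complex.measurableEquivRealProd.measurable (measurableSet_Icc.prod measurableSet_Icc)

lemma volume_openSquare (c : ℂ) (s : ℝ) (hs : 0 ≤ s) :
    volume {w : ℂ | |w.re - c.re| < s / 2 ∧ |w.im - c.im| < s / 2} =
      ENNReal.ofReal s * ENNReal.ofReal s := by
  have hset : {w : ℂ | |w.re - c.re| < s / 2 ∧ |w.im - c.im| < s / 2} =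
      (Complex.measurableEquivRealProd ⁻¹'
        (Set.Ioo (c.re - s/2) (c.re + s/2) ×ˢ Set.Ioo (c.im - s/2) (c.im + s/2))) := by
    ext w
    simp only [Set.mem_setOf_eq, Set.mem_preimage,
      Complex.measurableEquivRealProd_apply, Set.mem_prod, Set.mem_Ioo, abs_lt]
    constructor
    · rintro ⟨⟨h1, h2⟩, h3, h4⟩
      exact ⟨⟨by linarith, by linarith⟩, by linarith, by linarith⟩
    · rintro ⟨⟨h1, h2⟩, h3, h4⟩
      exact ⟨⟨by linarith, by linarith⟩, by linarith, by linarith⟩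
  rw [hset, Complex.volume_preserving_equiv_real_prod.measure_preimage
    ((measurableSet_Ioo.prod measurableSet_Ioo).nullMeasurableSet)]
  rw [MeasureTheory.Measure.volume_eq_prod, MeasureTheory.Measure.prod_prod, Real.volume_Ioo, Real.volume_Ioo]
  congr 1 <;> · congr 1; ring

lemma openSquare_subset_interior (c : ℂ) (s : ℝ) :
    {w : ℂ | |w.re - c.re| < s / 2 ∧ |w.im - c.im| < s / 2} ⊆
      interior (closedSquare c s) := by
  apply interior_maximal
  · intro w hw
    exact ⟨hw.1.le, hw.2.le⟩
  · have : {w : ℂ | |w.re - c.re| < s / 2 ∧ |w.im - c.im| < s / 2} =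
        ((fun w : ℂ => w.re) ⁻¹' {x | |x - c.re| < s / 2}) ∩
        ((fun w : ℂ => w.im) ⁻¹' {x | |x - c.im| < s / 2}) := rfl
    rw [this]
    apply IsOpen.inter
    · exact (isOpen_lt (by fun_prop) continuous_const).preimage Complex.continuous_re
    · exact (isOpen_lt (by fun_prop) continuous_const).preimage Complex.continuous_im

lemma m2_closedBall (z : ℂ) (R : ℝ) (hR : 0 ≤ R) :
    m2 (closedBall z R) = ENNReal.ofReal (R ^ 2) := by
  rw [m2, Measure.smul_apply, Complex.volume_closedBall, smul_eq_mul]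
  have hpi : (NNReal.pi : ENNReal) = ENNReal.ofReal π := by
    rw [← ENNReal.ofReal_coe_nnreal, NNReal.coe_real_pi]
  rw [hpi, ← mul_comm (ENNReal.ofReal π), ← mul_assoc,
    ENNReal.inv_mul_cancel (by simp [Real.pi_pos]) (by simp), one_mul,
    ← ENNReal.ofReal_pow hR]

theorem stmt8 :
    ∃ C : ℝ, 0 < C ∧
      ∀ (z : ℂ) (r R : ℝ) (N : ℕ) (centers : Fin N → ℂ),
        0 < r → r < R / 16 → 0 < N → (N : ℝ) * r = R →
        (∀ j, closedSquare (centers j) (Real.sqrt (π * r * R)) ⊆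
            closedBall z (R * (1 + 4 * Real.sqrt (r / R)))) →
        Pairwise (fun j k : Fin N =>
          Disjoint (interior (closedSquare (centers j) (Real.sqrt (π * r * R))))
                   (interior (closedSquare (centers k) (Real.sqrt (π * r * R))))) →
        m2 (symmDiff (closedBall z R)
            (⋃ j, closedSquare (centers j) (Real.sqrt (π * r * R))))
          ≤ ENNReal.ofReal (C * Real.sqrt r * R * Real.sqrt R) := by
  refine ⟨24, by norm_num, ?_⟩
  intro z r R N centers hr hrR hN hNr hsub hdisj
  have hR : 0 < R := by linarith
  set s : ℝ := Real.sqrt (π * r * R) with hs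
  set t : ℝ := Real.sqrt (r / R) with hts
  set R' : ℝ := R * (1 + 4 * t) with hR'
  have ht0 : 0 ≤ t := Real.sqrt_nonneg _
  have ht2 : t ^ 2 = r / R := Real.sq_sqrt (by positivity)
  have ht4 : t < 1 / 4 := by
    have : r / R < 1 / 16 := by rw [div_lt_div_iff₀ hR (by norm_num)]; linarith
    nlinarith [Real.sq_sqrt (show (0:ℝ) ≤ r / R by positivity), ht0]
  have hRR' : R ≤ R' := by nlinarith
  have hR'0 : 0 < R' := lt_of_lt_of_le hR hRR'
  set A : Set ℂ := closedBall z R with hA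
  set B : Set ℂ := ⋃ j, closedSquare (centers j) s with hB
  set U : Set ℂ := closedBall z R' with hU
  have hAU : A ⊆ U := closedBall_subset_closedBall hRR'
  have hBU : B ⊆ U := Set.iUnion_subset hsub
  have hmA : m2 A = ENNReal.ofReal (R ^ 2) := m2_closedBall z R hR.le
  have hmU : m2 U = ENNReal.ofReal (R' ^ 2) := m2_closedBall z R' hR'0.le
  -- measure of squares union from below
  have hs2 : s * s = π * r * R := Real.mul_self_sqrt (by positivity)
  have hmB : ENNReal.ofReal (R ^ 2) ≤ m2 B := by
    have hsq : ∀ j : Fin N, ENNReal.ofReal (r * R) ≤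
        m2 (interior (closedSquare (centers j) s)) := by
      intro j
      have h1 : volume {w : ℂ | |w.re - (centers j).re| < s / 2 ∧
          |w.im - (centers j).im| < s / 2} = ENNReal.ofReal s * ENNReal.ofReal s :=
        volume_openSquare _ _ (Real.sqrt_nonneg _)
      have h2 := measure_mono (μ := volume) (openSquare_subset_interior (centers j) s)
      rw [h1] at h2
      have h3 : ENNReal.ofReal s * ENNReal.ofReal s = ENNReal.ofReal (π * r * R) := by
        rw [← ENNReal.ofReal_mul (Real.sqrt_nonneg _), hs2]
      rw [h3] at h2
      calc ENNReal.ofReal (r * R) =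
          (ENNReal.ofReal π)⁻¹ * ENNReal.ofReal (π * r * R) := by
            rw [mul_assoc π, ENNReal.ofReal_mul Real.pi_pos.le, ← mul_assoc,
              ENNReal.inv_mul_cancel (by simp [Real.pi_pos]) (by simp), one_mul]
        _ ≤ (ENNReal.ofReal π)⁻¹ * volume (interior (closedSquare (centers j) s)) :=
            mul_le_mul_right h2 _
        _ = m2 (interior (closedSquare (centers j) s)) := rfl
    have hmeas : ∀ j : Fin N, MeasurableSet (interior (closedSquare (centers j) s)) :=
      fun j => isOpen_interior.measurableSet
    have hunion : m2 (⋃ j, interior (closedSquare (centers j) s)) =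
        ∑ j : Fin N, m2 (interior (closedSquare (centers j) s)) := by
      rw [measure_iUnion hdisj hmeas, tsum_fintype]
    have hsum : ENNReal.ofReal (R ^ 2) ≤
        ∑ j : Fin N, m2 (interior (closedSquare (centers j) s)) := by
      calc ENNReal.ofReal (R ^ 2) = ∑ _j : Fin N, ENNReal.ofReal (r * R) := by
            rw [Finset.sum_const, Finset.card_univ, Fintype.card_fin, nsmul_eq_mul,
              ← ENNReal.ofReal_natCast, ← ENNReal.ofReal_mul (by positivity)]
            congr 1
            rw [← hNr]; ring
        _ ≤ ∑ j : Fin N, m2 (interior (closedSquare (centers j) s)) :=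
            Finset.sum_le_sum fun j _ => hsq j
    calc ENNReal.ofReal (R ^ 2) ≤ m2 (⋃ j, interior (closedSquare (centers j) s)) := by
          rw [hunion]; exact hsum
      _ ≤ m2 B := measure_mono (Set.iUnion_mono fun j => interior_subset)
  -- symmetric difference bound
  have hmeasA : MeasurableSet A := measurableSet_closedBall
  have hmeasB : MeasurableSet B :=
    MeasurableSet.iUnion fun j => measurableSet_closedSquare _ _
  have hUfin : m2 U ≠ ⊤ := by rw [hmU]; exact ENNReal.ofReal_ne_top
  have hAfin : m2 A ≠ ⊤ := ne_top_of_le_ne_top hUfin (measure_mono hAU)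
  have hBfin : m2 B ≠ ⊤ := ne_top_of_le_ne_top hUfin (measure_mono hBU)
  have key : m2 (symmDiff A B) ≤ (m2 U - m2 B) + (m2 U - m2 A) := by
    have h1 : symmDiff A B ⊆ (U \ B) ∪ (U \ A) := by
      rintro w hw
      rcases hw with ⟨hwA, hwB⟩ | ⟨hwB, hwA⟩
      · exact Or.inl ⟨hAU hwA, hwB⟩
      · exact Or.inr ⟨hBU hwB, hwA⟩
    calc m2 (symmDiff A B) ≤ m2 ((U \ B) ∪ (U \ A)) := measure_mono h1
      _ ≤ m2 (U \ B) + m2 (U \ A) := measure_union_le _ _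
      _ = (m2 U - m2 B) + (m2 U - m2 A) := by
          rw [measure_diff hBU hmeasB.nullMeasurableSet hBfin,
            measure_diff hAU hmeasA.nullMeasurableSet hAfin]
  have hdiff : (m2 U - m2 B) + (m2 U - m2 A) ≤
      ENNReal.ofReal (2 * (R' ^ 2 - R ^ 2)) := by
    have h1 : m2 U - m2 B ≤ ENNReal.ofReal (R' ^ 2 - R ^ 2) := by
      calc m2 U - m2 B ≤ m2 U - ENNReal.ofReal (R ^ 2) := tsub_le_tsub_left hmB _
        _ = ENNReal.ofReal (R' ^ 2 - R ^ 2) := by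
            rw [hmU, ← ENNReal.ofReal_sub _ (by positivity)]
    have h2 : m2 U - m2 A ≤ ENNReal.ofReal (R' ^ 2 - R ^ 2) := by
      rw [hmU, hmA, ← ENNReal.ofReal_sub _ (by positivity)]
    calc (m2 U - m2 B) + (m2 U - m2 A) ≤
        ENNReal.ofReal (R' ^ 2 - R ^ 2) + ENNReal.ofReal (R' ^ 2 - R ^ 2) :=
          add_le_add h1 h2
      _ = ENNReal.ofReal (2 * (R' ^ 2 - R ^ 2)) := by
          rw [← ENNReal.ofReal_add (by nlinarith) (by nlinarith)]; congr 1; ring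
  refine le_trans key (le_trans hdiff (ENNReal.ofReal_le_ofReal ?_))
  -- real arithmetic
  have htsr : t * Real.sqrt R = Real.sqrt r := by
    rw [hts, Real.sqrt_div hr.le, div_mul_cancel₀]
    exact ne_of_gt (Real.sqrt_pos.mpr hR)
  have hsRR : Real.sqrt R * Real.sqrt R = R := Real.mul_self_sqrt hR.le
  have hkey : R ^ 2 * t = Real.sqrt r * R * Real.sqrt R := by
    linear_combination (-(t * R)) * hsRR + (R * Real.sqrt R) * htsr
  have hexp : R' ^ 2 - R ^ 2 = R ^ 2 * (8 * t + 16 * t ^ 2) := by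
    rw [hR']; ring
  have hbound : R' ^ 2 - R ^ 2 ≤ 12 * (R ^ 2 * t) := by
    have h16 : 16 * t ^ 2 ≤ 4 * t := by nlinarith
    rw [hexp]
    nlinarith [mul_le_mul_of_nonneg_left h16 (sq_nonneg R)]
  calc 2 * (R' ^ 2 - R ^ 2) ≤ 24 * (R ^ 2 * t) := by linarith
    _ = 24 * Real.sqrt r * R * Real.sqrt R := by rw [hkey]; ring
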